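/- arXiv:2310.11587 — 3 statements merged into one kernel-verified Lean document; each statement's English description precedes it below -/
import Mathlib

section
/- Suppose the M-grading of R = MvPolynomial (Fin N) ℂ is pointed, let I ⊆ R be an M-graded ideal, let m ∈ M, and let g ∈ R be M-homogeneous of degree m. Then g ∈ I if and only if λ_p(g) = 0 for every M-homogeneous polynomial p of degree m such that λ_p vanishes on I, i.e. g ∈ I if and only if ∂(g) = 0 for all ∂ ∈ D_0^m(I). -/
open MvPolynomial

/-- The Macaulay pairing `λ_p(f) = ∑_α coeff(α,p) * coeff(α,f)`, as a linear functional. -/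
noncomputable def lam {N : ℕ} (p : MvPolynomial (Fin N) ℂ) :
    MvPolynomial (Fin N) ℂ →ₗ[ℂ] ℂ where
  toFun f := ∑ α ∈ p.support, coeff α p * coeff α f
  map_add' f g := by simp [mul_add, Finset.sum_add_distrib]
  map_smul' c f := by
    simp [MvPolynomial.coeff_smul, Finset.mul_sum, mul_left_comm]

/-- An ideal is `M`-graded if it is generated by a set of `M`-homogeneous polynomials. -/
def IsMGraded {N : ℕ} {M : Type*} [AddCommGroup M] (w : Fin N → M)
    (I : Ideal (MvPolynomial (Fin N) ℂ)) : Prop :=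
  ∃ S : Set (MvPolynomial (Fin N) ℂ),
    (∀ s ∈ S, ∃ m : M, s.IsWeightedHomogeneous w m) ∧ I = Ideal.span S

theorem lam_apply {N : ℕ} (p f : MvPolynomial (Fin N) ℂ) :
    lam p f = ∑ α ∈ p.support, coeff α p * coeff α f := rfl

/-- **Ideal membership test (Cor. 4.1)**: for a pointed `M`-grading, an `M`-graded ideal
`I`, and `g` `M`-homogeneous of degree `m`, one has `g ∈ I` iff `∂(g) = 0` for all
`∂ ∈ D_0^m(I)`, i.e. iff `λ_p(g) = 0` for every `M`-homogeneous `p` of degree `m`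
such that `λ_p` vanishes on `I`. -/
theorem ideal_membership_test {N : ℕ} {M : Type*} [AddCommGroup M] (w : Fin N → M)
    (hpointed : ∀ m : M, {α : Fin N →₀ ℕ | Finsupp.weight w α = m}.Finite)
    (I : Ideal (MvPolynomial (Fin N) ℂ)) (hI : IsMGraded w I)
    (m : M) (g : MvPolynomial (Fin N) ℂ) (hg : g.IsWeightedHomogeneous w m) :
    g ∈ I ↔ ∀ p : MvPolynomial (Fin N) ℂ, p.IsWeightedHomogeneous w m →
      (∀ f ∈ I, lam p f = 0) → lam p g = 0 := by
  classical
  constructor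
  · intro hgI p _ hvan
    exact hvan g hgI
  · intro h
    by_contra hgI
    letI : GradedAlgebra (weightedHomogeneousSubmodule ℂ w) := weightedGradedAlgebra ℂ w
    obtain ⟨S, hS, rfl⟩ := hI
    have hIhom : (Ideal.span S).IsHomogeneous (weightedHomogeneousSubmodule ℂ w) :=
      Ideal.homogeneous_span _ S (fun s hs => by
        obtain ⟨n, hn⟩ := hS s hs
        exact ⟨n, (mem_weightedHomogeneousSubmodule ℂ w n s).mpr hn⟩)
    have hcomp : ∀ f ∈ Ideal.span S,
        weightedHomogeneousComponent w m f ∈ Ideal.span S := by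
      intro f hf
      have h1 := hIhom m hf
      have h2 : ((DirectSum.decompose (weightedHomogeneousSubmodule ℂ w) f m :
          weightedHomogeneousSubmodule ℂ w m) : MvPolynomial (Fin N) ℂ) =
          weightedHomogeneousComponent w m f := MvPolynomial.decompose'_apply ℂ w f m
      rwa [h2] at h1
    set A : Finset (Fin N →₀ ℕ) := (hpointed m).toFinset with hA
    have hmemA : ∀ d : Fin N →₀ ℕ, d ∈ A ↔ Finsupp.weight w d = m := by
      intro d; rw [hA, Set.Finite.mem_toFinset]; rfl
    set Φ : MvPolynomial (Fin N) ℂ →ₗ[ℂ] (A → ℂ) :=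
      LinearMap.pi (fun α : A => lcoeff ℂ (α : Fin N →₀ ℕ)) with hΦ
    have hΦapply : ∀ f (β : A), Φ f β = coeff (β : Fin N →₀ ℕ) f := fun f β => rfl
    set T : Submodule ℂ (A → ℂ) :=
      Submodule.map Φ (Submodule.restrictScalars ℂ (Ideal.span S)) with hT
    have hgT : Φ g ∉ T := by
      intro hmem
      obtain ⟨f, hfI, hff⟩ := hmem
      have hf' := hcomp f hfI
      have hgf : g = weightedHomogeneousComponent w m f := by
        ext d
        rw [coeff_weightedHomogeneousComponent]
        by_cases hd : Finsupp.weight w d = m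
        · rw [if_pos hd]
          have hdA : d ∈ A := (hmemA d).mpr hd
          have := congrFun hff ⟨d, hdA⟩
          rw [hΦapply, hΦapply] at this
          exact this.symm
        · rw [if_neg hd]
          by_contra hne
          exact hd (hg hne)
      exact hgI (hgf ▸ hf')
    obtain ⟨φ, hφg, hφT⟩ := T.exists_dual_map_eq_bot_of_notMem hgT inferInstance
    have hφ0 : ∀ x ∈ T, φ x = 0 := by
      intro x hx
      have : φ x ∈ T.map φ := Submodule.mem_map_of_mem hx
      rw [hφT] at this
      simpa using this
    set p : MvPolynomial (Fin N) ℂ :=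
      ∑ α ∈ A, monomial α (φ (Φ (monomial α 1))) with hp
    have hcoeffp : ∀ d, coeff d p =
        if d ∈ A then φ (Φ (monomial d 1)) else 0 := by
      intro d
      rw [hp, coeff_sum]
      simp only [coeff_monomial]
      rw [Finset.sum_ite_eq' A d (fun α => φ (Φ (monomial α 1)))]
    have hphom : p.IsWeightedHomogeneous w m := by
      intro d hd
      by_contra hdm
      have : d ∉ A := fun hdA => hdm ((hmemA d).mp hdA)
      rw [hcoeffp, if_neg this] at hd
      exact hd rfl
    have hlam : ∀ f, lam p f = φ (Φ f) := by
      intro f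
      have h1 : lam p f = ∑ α ∈ A, coeff α p * coeff α f := by
        rw [lam_apply]
        apply Finset.sum_subset
        · intro x hx
          rw [mem_support_iff] at hx
          by_contra hxA
          exact hx (by rw [hcoeffp, if_neg hxA])
        · intro x _ hx
          rw [notMem_support_iff.mp hx, zero_mul]
      have h2 : Φ f = ∑ α ∈ A.attach,
          coeff (α : Fin N →₀ ℕ) f • Φ (monomial (α : Fin N →₀ ℕ) 1) := by
        funext β
        simp only [Finset.sum_apply, Pi.smul_apply, smul_eq_mul, hΦapply, coeff_monomial,
          mul_ite, mul_one, mul_zero]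
        have : ∀ α ∈ A.attach, (if (α : Fin N →₀ ℕ) = (β : Fin N →₀ ℕ) then
            coeff (α : Fin N →₀ ℕ) f else 0) =
            (if α = β then coeff (α : Fin N →₀ ℕ) f else 0) := by
          intro α _
          congr 1
          exact propext Subtype.ext_iff.symm
        rw [Finset.sum_congr rfl this, Finset.sum_ite_eq' A.attach β
          (fun α => coeff (α : Fin N →₀ ℕ) f), if_pos (Finset.mem_attach _ _)]
      rw [h1, h2, map_sum]
      simp only [map_smul, smul_eq_mul]
      rw [← Finset.sum_attach A (fun α => coeff α p * coeff α f)]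
      apply Finset.sum_congr rfl
      intro α _
      rw [hcoeffp, if_pos α.2, mul_comm]
    have hvan : ∀ f ∈ Ideal.span S, lam p f = 0 := by
      intro f hf
      rw [hlam]
      exact hφ0 _ ⟨f, hf, rfl⟩
    have hzero := h p hphom hvan
    rw [hlam] at hzero
    exact hφg hzero
end

section
/- Let g ∈ R = MvPolynomial (Fin N) ℂ be M-homogeneous of degree d, and let p ∈ R be M-homogeneous of degree m'. Then there exists a unique polynomial q ∈ R such that λ_q(f) = λ_p(g·f) for all f ∈ R, and this q is M-homogeneous of degree m' − d. In particular, the operator Φ_g(∂)(f) = ∂(g·f) maps the Macaulay dual space D_0 to itself and maps the degree-m' graded piece D_0^{m'} into D_0^{m'−d}. -/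
open MvPolynomial

lemma lam_monomial_one {N : ℕ} (q : MvPolynomial (Fin N) ℂ) (α : Fin N →₀ ℕ) :
    lam q (monomial α 1) = coeff α q := by
  simp only [lam, LinearMap.coe_mk, AddHom.coe_mk, coeff_monomial]
  rw [Finset.sum_eq_single α]
  · simp
  · intro b _ hb; simp [Ne.symm hb]
  · intro h; simp [MvPolynomial.notMem_support_iff.mp h]

/-- `Φ_g` is well defined on `D_0` and maps the graded piece `D_0^{m'}` into
`D_0^{m'-d}`: for `g` `M`-homogeneous of degree `d` and `p` `M`-homogeneous of degree
`m'`, there is a unique polynomial `q` with `λ_q(f) = λ_p(g·f)` for all `f`, and this `q`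
is `M`-homogeneous of degree `m' - d`. -/
theorem phi_maps_graded_pieces {N : ℕ} {M : Type*} [AddCommGroup M] (w : Fin N → M)
    (g : MvPolynomial (Fin N) ℂ) (d : M) (hg : g.IsWeightedHomogeneous w d)
    (p : MvPolynomial (Fin N) ℂ) (m' : M) (hp : p.IsWeightedHomogeneous w m') :
    ∃ q : MvPolynomial (Fin N) ℂ,
      (∀ f : MvPolynomial (Fin N) ℂ, lam q f = lam p (g * f)) ∧
      q.IsWeightedHomogeneous w (m' - d) ∧
      ∀ q' : MvPolynomial (Fin N) ℂ,
        (∀ f : MvPolynomial (Fin N) ℂ, lam q' f = lam p (g * f)) → q' = q := by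
  set q : MvPolynomial (Fin N) ℂ :=
    ∑ β ∈ p.support, ∑ γ ∈ g.support,
      if γ ≤ β then monomial (β - γ) (coeff β p * coeff γ g) else 0 with hq
  have hcoeff : ∀ α, coeff α q = lam p (g * monomial α 1) := by
    intro α
    have hrhs : lam p (g * monomial α 1)
        = ∑ β ∈ p.support, coeff β p * (if α ≤ β then coeff (β - α) g else 0) := by
      simp only [lam, LinearMap.coe_mk, AddHom.coe_mk]
      refine Finset.sum_congr rfl fun β _ => ?_
      rw [show coeff β (g * monomial α 1) = _ from coeff_mul_monomial' β α (1 : ℂ) g]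
      simp
    rw [hrhs, hq]
    simp only [coeff_sum, coeff_monomial, apply_ite (coeff α), coeff_zero]
    refine Finset.sum_congr rfl fun β _ => ?_
    by_cases hle : α ≤ β
    · rw [if_pos hle]
      rw [Finset.sum_eq_single (β - α)]
      · have h1 : β - α ≤ β := tsub_le_self
        rw [if_pos h1, tsub_tsub_cancel_of_le hle, if_pos rfl, mul_comm]
      · intro γ hγ hne
        by_cases h2 : γ ≤ β
        · rw [if_pos h2, if_neg]
          intro h3
          exact hne (by rw [← h3, tsub_tsub_cancel_of_le h2])
        · rw [if_neg h2]
      · intro hmem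
        rw [MvPolynomial.notMem_support_iff.mp hmem, mul_zero]
        have h1 : β - α ≤ β := tsub_le_self
        rw [if_pos h1, tsub_tsub_cancel_of_le hle, if_pos rfl]
    · rw [if_neg hle, mul_zero]
      apply Finset.sum_eq_zero
      intro γ hγ
      by_cases h2 : γ ≤ β
      · rw [if_pos h2, if_neg]
        intro h3
        exact hle (h3 ▸ tsub_le_self)
      · rw [if_neg h2]
  have key : ∀ f : MvPolynomial (Fin N) ℂ, lam q f = lam p (g * f) := by
    intro f
    conv_lhs => rw [f.as_sum]
    conv_rhs => rw [f.as_sum, Finset.mul_sum]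
    rw [map_sum, map_sum]
    refine Finset.sum_congr rfl fun α hα => ?_
    have h1 : monomial α (coeff α f) = (coeff α f) • monomial α (1 : ℂ) := by
      rw [smul_monomial, smul_eq_mul, mul_one]
    rw [h1, map_smul, mul_smul_comm, map_smul, lam_monomial_one, hcoeff]
  refine ⟨q, key, ?_, ?_⟩
  · rw [← mem_weightedHomogeneousSubmodule, hq]
    refine Submodule.sum_mem _ fun β hβ => Submodule.sum_mem _ fun γ hγ => ?_
    by_cases h2 : γ ≤ β
    · rw [if_pos h2, mem_weightedHomogeneousSubmodule]
      refine isWeightedHomogeneous_monomial w _ _ ?_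
      have hβd : Finsupp.weight w β = m' := hp (mem_support_iff.mp hβ)
      have hγd : Finsupp.weight w γ = d := hg (mem_support_iff.mp hγ)
      have h3 : (β - γ) + γ = β := tsub_add_cancel_of_le h2
      have : Finsupp.weight w (β - γ) + Finsupp.weight w γ = m' := by
        rw [← map_add, h3, hβd]
      rw [hγd] at this
      exact eq_sub_of_add_eq this
    · rw [if_neg h2, mem_weightedHomogeneousSubmodule]
      exact isWeightedHomogeneous_zero _ _ _
  · intro q' hq'
    ext α
    rw [← lam_monomial_one q' α, ← lam_monomial_one q α, hq' _, key _]
end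

section
/- Let I ⊆ R = MvPolynomial (Fin N) ℂ be an M-graded ideal, let J = Ideal.span {g_1, …, g_t} where each g_i is a nonzero M-homogeneous polynomial of degree d_i, assume the grading is pointed, and let m ∈ M. Then D_0^m(I : J) = ∑_{i=1}^t Φ_{g_i}(D_0^{m+d_i}(I)); explicitly, an M-homogeneous polynomial q of degree m satisfies λ_q(f) = 0 for all f in the ideal quotient I : J if and only if q = q_1 + ⋯ + q_t where for each i there exists an M-homogeneous p_i of degree m + d_i with λ_{p_i} vanishing on I and λ_{q_i}(f) = λ_{p_i}(g_i·f) for all f ∈ R. -/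
open MvPolynomial

namespace MacaulayAux

variable {N : ℕ}

theorem lam_apply (p f : MvPolynomial (Fin N) ℂ) :
    lam p f = ∑ α ∈ p.support, coeff α p * coeff α f := rfl

theorem lam_eq_sum (p f : MvPolynomial (Fin N) ℂ) {s : Finset (Fin N →₀ ℕ)}
    (hs : p.support ⊆ s) :
    lam p f = ∑ α ∈ s, coeff α p * coeff α f := by
  rw [lam_apply]
  refine Finset.sum_subset hs fun x _ hx => ?_
  rw [MvPolynomial.notMem_support_iff.mp hx, zero_mul]

theorem lam_add_left (p q f : MvPolynomial (Fin N) ℂ) :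
    lam (p + q) f = lam p f + lam q f := by
  rw [lam_eq_sum (p + q) f MvPolynomial.support_add,
    lam_eq_sum p f Finset.subset_union_left, lam_eq_sum q f Finset.subset_union_right,
    ← Finset.sum_add_distrib]
  exact Finset.sum_congr rfl fun α _ => by rw [coeff_add, add_mul]

theorem lam_smul_left (c : ℂ) (p f : MvPolynomial (Fin N) ℂ) :
    lam (c • p) f = c * lam p f := by
  rw [lam_eq_sum (c • p) f MvPolynomial.support_smul, lam_apply, Finset.mul_sum]
  exact Finset.sum_congr rfl fun α _ => by rw [MvPolynomial.coeff_smul, smul_eq_mul, mul_assoc]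

theorem lam_comm (p f : MvPolynomial (Fin N) ℂ) : lam p f = lam f p := by
  rw [lam_eq_sum p f (Finset.subset_union_left (s₂ := f.support)),
    lam_eq_sum f p (Finset.subset_union_right (s₁ := p.support))]
  exact Finset.sum_congr rfl fun α _ => mul_comm _ _

theorem lam_zero_left (f : MvPolynomial (Fin N) ℂ) : lam 0 f = 0 := by
  simp [lam_apply]

/-- The Macaulay pairing as a bilinear form. -/
noncomputable def lamB : LinearMap.BilinForm ℂ (MvPolynomial (Fin N) ℂ) :=
  LinearMap.mk₂ ℂ (fun p f => lam p f) lam_add_left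
    (fun c p f => by show lam (c • p) f = c • lam p f; rw [lam_smul_left, smul_eq_mul])
    (fun p f g => map_add (lam p) f g)
    (fun c p f => by show lam p (c • f) = c • lam p f; exact map_smul (lam p) c f)

@[simp] theorem lamB_apply (p f : MvPolynomial (Fin N) ℂ) : lamB p f = lam p f := rfl

theorem lam_sum_left {ι : Type*} (s : Finset ι) (p : ι → MvPolynomial (Fin N) ℂ)
    (f : MvPolynomial (Fin N) ℂ) :
    lam (∑ i ∈ s, p i) f = ∑ i ∈ s, lam (p i) f := by
  have := map_sum (lamB.flip f) p s
  exact this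

theorem lam_monomial (q : MvPolynomial (Fin N) ℂ) (γ : Fin N →₀ ℕ) (c : ℂ) :
    lam q (monomial γ c) = coeff γ q * c := by
  classical
  rw [lam_apply]
  simp only [coeff_monomial, mul_ite, mul_zero]
  rw [Finset.sum_ite_eq]
  split_ifs with h
  · rfl
  · rw [MvPolynomial.notMem_support_iff.mp h, zero_mul]


/-- Contraction of `p` by `g`: the polynomial `q` with `λ_q(f) = λ_p(g·f)` for all `f`. -/
noncomputable def contract (g p : MvPolynomial (Fin N) ℂ) : MvPolynomial (Fin N) ℂ :=
  ∑ α ∈ p.support, ∑ β ∈ g.support,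
    if β ≤ α then monomial (α - β) (coeff β g * coeff α p) else 0

theorem coeff_contract (g p : MvPolynomial (Fin N) ℂ) (γ : Fin N →₀ ℕ) :
    coeff γ (contract g p) =
      ∑ α ∈ p.support, (if γ ≤ α then coeff (α - γ) g else 0) * coeff α p := by
  classical
  rw [contract, coeff_sum]
  refine Finset.sum_congr rfl fun α hα => ?_
  rw [coeff_sum]
  by_cases hγ : γ ≤ α
  · rw [if_pos hγ]
    rw [Finset.sum_eq_single (α - γ)]
    · rw [if_pos tsub_le_self, coeff_monomial, tsub_tsub_cancel_of_le hγ, if_pos rfl]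
    · intro β hβ hne
      split_ifs with hβα
      · rw [coeff_monomial, if_neg]
        intro heq
        exact hne (by rw [← heq, tsub_tsub_cancel_of_le hβα])
      · exact coeff_zero _
    · intro hns
      rw [if_pos tsub_le_self, coeff_monomial, tsub_tsub_cancel_of_le hγ, if_pos rfl,
        MvPolynomial.notMem_support_iff.mp hns, zero_mul]
  · rw [if_neg hγ, zero_mul]
    refine Finset.sum_eq_zero fun β hβ => ?_
    split_ifs with hβα
    · rw [coeff_monomial, if_neg]
      intro heq
      exact hγ (heq ▸ tsub_le_self)
    · exact coeff_zero _

theorem lam_contract_monomial (g p : MvPolynomial (Fin N) ℂ) (γ : Fin N →₀ ℕ) (c : ℂ) :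
    lam (contract g p) (monomial γ c) = lam p (g * monomial γ c) := by
  classical
  rw [lam_monomial, coeff_contract, lam_apply, Finset.sum_mul]
  refine Finset.sum_congr rfl fun α hα => ?_
  rw [coeff_mul_monomial']
  split_ifs with hle
  · ring
  · rw [zero_mul, zero_mul, mul_zero]

theorem lam_contract (g p f : MvPolynomial (Fin N) ℂ) :
    lam (contract g p) f = lam p (g * f) := by
  rw [show f = ∑ γ ∈ f.support, monomial γ (coeff γ f) from f.as_sum,
    Finset.mul_sum, map_sum, map_sum]
  exact Finset.sum_congr rfl fun γ _ => lam_contract_monomial g p γ (coeff γ f)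

theorem contract_isWeightedHomogeneous {M : Type*} [AddCommGroup M] (w : Fin N → M)
    {g p : MvPolynomial (Fin N) ℂ} {dd mm : M} (hg : g.IsWeightedHomogeneous w dd)
    (hp : p.IsWeightedHomogeneous w (mm + dd)) :
    (contract g p).IsWeightedHomogeneous w mm := by
  rw [← mem_weightedHomogeneousSubmodule ℂ]
  refine Submodule.sum_mem _ fun α hα => Submodule.sum_mem _ fun β hβ => ?_
  split_ifs with h
  · by_cases hc : coeff β g * coeff α p = 0
    · rw [hc, map_zero]
      exact Submodule.zero_mem _
    · have h1 : Finsupp.weight w β = dd := hg (left_ne_zero_of_mul hc)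
      have h2 : Finsupp.weight w α = mm + dd := hp (right_ne_zero_of_mul hc)
      rw [mem_weightedHomogeneousSubmodule]
      refine isWeightedHomogeneous_monomial _ _ _ ?_
      have h3 : Finsupp.weight w (α - β) + Finsupp.weight w β = Finsupp.weight w α := by
        rw [← map_add, tsub_add_cancel_of_le h]
      rw [h1, h2] at h3
      exact add_right_cancel h3
  · exact Submodule.zero_mem _

theorem component_mul {M : Type*} [AddCommGroup M] {w : Fin N → M}
    {s : MvPolynomial (Fin N) ℂ} {e : M} (hs : s.IsWeightedHomogeneous w e)
    (n : M) (r : MvPolynomial (Fin N) ℂ) :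
    weightedHomogeneousComponent w n (r * s) =
      weightedHomogeneousComponent w (n - e) r * s := by
  classical
  ext α
  rw [coeff_weightedHomogeneousComponent, coeff_mul, coeff_mul]
  by_cases h : Finsupp.weight w α = n
  · rw [if_pos h]
    refine Finset.sum_congr rfl fun bc hbc => ?_
    rw [Finset.HasAntidiagonal.mem_antidiagonal] at hbc
    rw [coeff_weightedHomogeneousComponent]
    by_cases hγ : coeff bc.2 s = 0
    · rw [hγ, mul_zero, mul_zero]
    · rw [if_pos]
      rw [eq_sub_iff_add_eq, ← hs hγ, ← map_add, hbc, h]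
  · rw [if_neg h]
    symm
    refine Finset.sum_eq_zero fun bc hbc => ?_
    rw [Finset.HasAntidiagonal.mem_antidiagonal] at hbc
    rw [coeff_weightedHomogeneousComponent]
    by_cases hγ : coeff bc.2 s = 0
    · rw [hγ, mul_zero]
    · rw [if_neg, zero_mul]
      intro hb
      exact h (by rw [← hbc, map_add, hb, hs hγ, sub_add_cancel])

theorem lam_eq_lam_component {M : Type*} [AddCommGroup M] {w : Fin N → M}
    {p : MvPolynomial (Fin N) ℂ} {n : M} (hp : p.IsWeightedHomogeneous w n)
    (f : MvPolynomial (Fin N) ℂ) :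
    lam p f = lam p (weightedHomogeneousComponent w n f) := by
  classical
  rw [lam_apply, lam_apply]
  refine Finset.sum_congr rfl fun α hα => ?_
  rw [coeff_weightedHomogeneousComponent, if_pos (hp (mem_support_iff.mp hα))]

theorem fd {M : Type*} [AddCommGroup M] {w : Fin N → M}
    (hpointed : ∀ m : M, {α : Fin N →₀ ℕ | Finsupp.weight w α = m}.Finite) (n : M) :
    FiniteDimensional ℂ (weightedHomogeneousSubmodule ℂ w n) := by
  classical
  have hfin : ((fun α : Fin N →₀ ℕ => (monomial α (1 : ℂ))) ''
      {α | Finsupp.weight w α = n}).Finite := (hpointed n).image _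
  have hle : weightedHomogeneousSubmodule ℂ w n ≤ Submodule.span ℂ
      ((fun α : Fin N →₀ ℕ => (monomial α (1 : ℂ))) '' {α | Finsupp.weight w α = n}) := by
    intro p hp
    rw [mem_weightedHomogeneousSubmodule] at hp
    have hmono : ∀ α ∈ p.support, (monomial α (coeff α p) : MvPolynomial (Fin N) ℂ) ∈
        Submodule.span ℂ ((fun α : Fin N →₀ ℕ => (monomial α (1 : ℂ))) ''
          {α | Finsupp.weight w α = n}) := by
      intro α hα
      have h0 : (monomial α (1 : ℂ) : MvPolynomial (Fin N) ℂ) ∈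
          ((fun α : Fin N →₀ ℕ => (monomial α (1 : ℂ))) '' {α | Finsupp.weight w α = n}) :=
        ⟨α, hp (mem_support_iff.mp hα), rfl⟩
      have h2 := Submodule.smul_mem _ (coeff α p) (Submodule.subset_span h0)
      rwa [smul_monomial, smul_eq_mul, mul_one] at h2
    have hsum := Submodule.sum_mem _ hmono
    rwa [← p.as_sum] at hsum
  haveI := FiniteDimensional.span_of_finite ℂ hfin
  exact Submodule.finiteDimensional_of_le hle

theorem restrict_refl (W : Submodule ℂ (MvPolynomial (Fin N) ℂ)) :
    (lamB.restrict W).IsRefl := by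
  intro x y h
  have hx : lam (x : MvPolynomial (Fin N) ℂ) (y : MvPolynomial (Fin N) ℂ) = 0 := h
  show lam (y : MvPolynomial (Fin N) ℂ) (x : MvPolynomial (Fin N) ℂ) = 0
  rw [← lam_comm]
  exact hx

theorem restrict_nondeg {M : Type*} [AddCommGroup M] (w : Fin N → M) (n : M) :
    (lamB.restrict (weightedHomogeneousSubmodule ℂ w n)).Nondegenerate := by
  refine (LinearMap.IsRefl.nondegenerate_iff_separatingLeft (restrict_refl _)).mpr ?_
  intro x hx
  rw [← Submodule.coe_eq_zero]
  ext α
  rw [MvPolynomial.coeff_zero]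
  by_contra h
  have hw : Finsupp.weight w α = n := x.2 h
  have hmem : (monomial α (1 : ℂ) : MvPolynomial (Fin N) ℂ) ∈
      weightedHomogeneousSubmodule ℂ w n := isWeightedHomogeneous_monomial _ _ _ hw
  have h0 : lam (x : MvPolynomial (Fin N) ℂ) (monomial α 1) = 0 := hx ⟨_, hmem⟩
  rw [lam_monomial, mul_one] at h0
  exact h h0

theorem component_mem {M : Type*} [AddCommGroup M] {w : Fin N → M}
    {I : Ideal (MvPolynomial (Fin N) ℂ)} (hI : IsMGraded w I)
    {f : MvPolynomial (Fin N) ℂ} (hf : f ∈ I) (n : M) :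
    weightedHomogeneousComponent w n f ∈ I := by
  classical
  obtain ⟨S, hS, rfl⟩ := hI
  obtain ⟨c, hc, rfl⟩ := Submodule.mem_span_set.mp hf
  rw [Finsupp.sum, map_sum]
  refine Ideal.sum_mem _ fun a ha => ?_
  obtain ⟨e, he⟩ := hS a (hc ha)
  rw [smul_eq_mul, component_mul he]
  exact Ideal.mul_mem_left _ _ (Ideal.subset_span (hc ha))

end MacaulayAux

open MacaulayAux

/-- **Thm. 4.1(2), explicit form**: for a pointed `M`-grading, an `M`-graded ideal `I`,
and `J = ⟨g₁,…,g_t⟩` with each `g_i` nonzero `M`-homogeneous of degree `d_i`,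
`D_0^m(I : J) = ∑_i Φ_{g_i}(D_0^{m+d_i}(I))`: an `M`-homogeneous `q` of degree `m`
satisfies `λ_q(f) = 0` for all `f ∈ I : J` iff `q = q₁ + ⋯ + q_t` where for each `i`
there is an `M`-homogeneous `p_i` of degree `m + d_i` with `λ_{p_i}` vanishing on `I`
and `λ_{q_i}(f) = λ_{p_i}(g_i·f)` for all `f`. -/
theorem dualSpace_colon_ideal {N t : ℕ} {M : Type*} [AddCommGroup M] (w : Fin N → M)
    (hpointed : ∀ m : M, {α : Fin N →₀ ℕ | Finsupp.weight w α = m}.Finite)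
    (I : Ideal (MvPolynomial (Fin N) ℂ)) (hI : IsMGraded w I)
    (g : Fin t → MvPolynomial (Fin N) ℂ) (d : Fin t → M)
    (hg0 : ∀ i, g i ≠ 0) (hg : ∀ i, (g i).IsWeightedHomogeneous w (d i))
    (J : Ideal (MvPolynomial (Fin N) ℂ)) (hJ : J = Ideal.span (Set.range g))
    (m : M) (q : MvPolynomial (Fin N) ℂ) (hq : q.IsWeightedHomogeneous w m) :
    (∀ f ∈ I.colon J, lam q f = 0) ↔
      ∃ qs : Fin t → MvPolynomial (Fin N) ℂ, q = ∑ i, qs i ∧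
        ∀ i, ∃ p : MvPolynomial (Fin N) ℂ, p.IsWeightedHomogeneous w (m + d i) ∧
          (∀ f ∈ I, lam p f = 0) ∧
          ∀ f : MvPolynomial (Fin N) ℂ, lam (qs i) f = lam p (g i * f) := by
  classical
  constructor
  · -- hard direction
    intro hvan
    set V := weightedHomogeneousSubmodule ℂ w m with hVdef
    haveI : FiniteDimensional ℂ V := fd hpointed m
    set B := lamB.restrict V with hBdef
    -- the annihilator of I
    set ann : Submodule ℂ (MvPolynomial (Fin N) ℂ) :=
      ⨅ (f : MvPolynomial (Fin N) ℂ) (_ : f ∈ I), LinearMap.ker (lamB.flip f) with hann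
    have mem_ann : ∀ p : MvPolynomial (Fin N) ℂ,
        p ∈ ann ↔ ∀ f ∈ I, lam p f = 0 := by
      intro p
      simp [hann, Submodule.mem_iInf, LinearMap.mem_ker]
    set D : Fin t → Submodule ℂ (MvPolynomial (Fin N) ℂ) := fun i =>
      weightedHomogeneousSubmodule ℂ w (m + d i) ⊓ ann with hD
    set S : Set V := {x | ∃ i : Fin t, ∃ p ∈ D i,
      (x : MvPolynomial (Fin N) ℂ) = contract (g i) p} with hS
    set T : Submodule ℂ V := Submodule.span ℂ S with hT
    have hqT : (⟨q, hq⟩ : V) ∈ T := by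
      rw [← LinearMap.BilinForm.orthogonal_orthogonal (restrict_nondeg w m) (restrict_refl V) T]
      rw [LinearMap.BilinForm.mem_orthogonal_iff]
      intro y hy
      -- first: for each i, g i * y ∈ I
      have hyI : ∀ i : Fin t, g i * (y : MvPolynomial (Fin N) ℂ) ∈ I := by
        intro i
        haveI : FiniteDimensional ℂ (weightedHomogeneousSubmodule ℂ w (m + d i)) :=
          fd hpointed _
        have hmemW : g i * (y : MvPolynomial (Fin N) ℂ) ∈
            weightedHomogeneousSubmodule ℂ w (m + d i) := by
          rw [mem_weightedHomogeneousSubmodule]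
          have hmul := (hg i).mul (y.2 : IsWeightedHomogeneous w (y : MvPolynomial (Fin N) ℂ) m)
          rwa [add_comm] at hmul
        set Wi := weightedHomogeneousSubmodule ℂ w (m + d i) with hWi
        set Ii : Submodule ℂ Wi := (I.restrictScalars ℂ).comap Wi.subtype with hIi
        have key : (⟨g i * (y : MvPolynomial (Fin N) ℂ), hmemW⟩ : Wi) ∈ Ii := by
          rw [← LinearMap.BilinForm.orthogonal_orthogonal (restrict_nondeg w (m + d i))
            (restrict_refl Wi) Ii]
          rw [LinearMap.BilinForm.mem_orthogonal_iff]
          intro x hx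
          have hxD : (x : MvPolynomial (Fin N) ℂ) ∈ D i := by
            refine ⟨x.2, (mem_ann _).mpr fun f hf => ?_⟩
            rw [lam_eq_lam_component (x.2 : IsWeightedHomogeneous w
              (x : MvPolynomial (Fin N) ℂ) (m + d i)) f]
            have hcmem : weightedHomogeneousComponent w (m + d i) f ∈ I :=
              component_mem hI hf _
            have hcW : weightedHomogeneousComponent w (m + d i) f ∈ Wi :=
              weightedHomogeneousComponent_mem w f (m + d i)
            have h0 : lam (weightedHomogeneousComponent w (m + d i) f)
                (x : MvPolynomial (Fin N) ℂ) = 0 :=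
              hx ⟨_, hcW⟩ (by simpa [hIi] using hcmem)
            rw [lam_comm]
            exact h0
          have hcontr : contract (g i) (x : MvPolynomial (Fin N) ℂ) ∈ V :=
            contract_isWeightedHomogeneous w (hg i)
              (x.2 : IsWeightedHomogeneous w (x : MvPolynomial (Fin N) ℂ) (m + d i))
          have hTmem : (⟨contract (g i) (x : MvPolynomial (Fin N) ℂ), hcontr⟩ : V) ∈ T :=
            Submodule.subset_span ⟨i, (x : MvPolynomial (Fin N) ℂ), hxD, rfl⟩
          have h0 : lam (contract (g i) (x : MvPolynomial (Fin N) ℂ))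
              (y : MvPolynomial (Fin N) ℂ) = 0 := hy _ hTmem
          show lam (x : MvPolynomial (Fin N) ℂ) (g i * (y : MvPolynomial (Fin N) ℂ)) = 0
          rw [← lam_contract]
          exact h0
        simpa [hIi] using key
      -- hence y ∈ I : J
      have hyColon : (y : MvPolynomial (Fin N) ℂ) ∈ I.colon J := by
        rw [Submodule.mem_colon]
        intro p hp
        rw [hJ] at hp
        have hle : Ideal.span (Set.range g) ≤
            Submodule.comap (LinearMap.mulLeft (MvPolynomial (Fin N) ℂ)
              (y : MvPolynomial (Fin N) ℂ)) I := by
          rw [Ideal.span_le]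
          rintro _ ⟨i, rfl⟩
          simpa [mul_comm] using hyI i
        have hmem := hle hp
        simpa [smul_eq_mul, mul_comm] using hmem
      show lam (y : MvPolynomial (Fin N) ℂ) q = 0
      rw [lam_comm]
      exact hvan _ hyColon
    -- extract the decomposition via span induction
    have main : ∀ (x : V), x ∈ T →
        ∃ qs : Fin t → MvPolynomial (Fin N) ℂ,
          (x : MvPolynomial (Fin N) ℂ) = ∑ i, qs i ∧
          ∀ i, ∃ p : MvPolynomial (Fin N) ℂ, p.IsWeightedHomogeneous w (m + d i) ∧
            (∀ f ∈ I, lam p f = 0) ∧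
            ∀ f : MvPolynomial (Fin N) ℂ, lam (qs i) f = lam p (g i * f) := by
      intro x hx
      refine Submodule.span_induction ?_ ?_ ?_ ?_ hx
      · rintro x ⟨i, p, hpD, hxp⟩
        refine ⟨fun j => if j = i then contract (g i) p else 0, ?_, ?_⟩
        · rw [Finset.sum_ite_eq' Finset.univ i, if_pos (Finset.mem_univ i), hxp]
        · intro j
          by_cases hji : j = i
          · subst hji
            refine ⟨p, hpD.1, fun f hf => (mem_ann p).mp hpD.2 f hf, fun f => ?_⟩
            dsimp only
            rw [if_pos rfl, lam_contract]
          · refine ⟨0, isWeightedHomogeneous_zero ℂ w _, fun f _ => lam_zero_left f, fun f => ?_⟩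
            dsimp only
            rw [if_neg hji, lam_zero_left, lam_zero_left]
      · refine ⟨fun _ => 0, by simp, fun i => ⟨0, isWeightedHomogeneous_zero ℂ w _,
          fun f _ => lam_zero_left f, fun f => by rw [lam_zero_left, lam_zero_left]⟩⟩
      · rintro x y hxT hyT ⟨qs1, hq1, hp1⟩ ⟨qs2, hq2, hp2⟩
        refine ⟨fun i => qs1 i + qs2 i, ?_, ?_⟩
        · rw [Submodule.coe_add, hq1, hq2, ← Finset.sum_add_distrib]
        · intro i
          obtain ⟨p1, hh1, hv1, hf1⟩ := hp1 i
          obtain ⟨p2, hh2, hv2, hf2⟩ := hp2 i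
          refine ⟨p1 + p2, hh1.add hh2, fun f hf => ?_, fun f => ?_⟩
          · rw [lam_add_left, hv1 f hf, hv2 f hf, add_zero]
          · rw [lam_add_left, lam_add_left, hf1 f, hf2 f]
      · rintro c x hxT ⟨qs1, hq1, hp1⟩
        refine ⟨fun i => c • qs1 i, ?_, ?_⟩
        · rw [Submodule.coe_smul, hq1, Finset.smul_sum]
        · intro i
          obtain ⟨p1, hh1, hv1, hf1⟩ := hp1 i
          refine ⟨c • p1, ?_, fun f hf => ?_, fun f => ?_⟩
          · exact (weightedHomogeneousSubmodule ℂ w (m + d i)).smul_mem c hh1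
          · rw [lam_smul_left, hv1 f hf, mul_zero]
          · rw [lam_smul_left, lam_smul_left, hf1 f]
    obtain ⟨qs, hsum, hprop⟩ := main _ hqT
    exact ⟨qs, hsum, hprop⟩
  · -- easy direction
    rintro ⟨qs, rfl, hqs⟩ f hf
    rw [lam_sum_left]
    refine Finset.sum_eq_zero fun i _ => ?_
    obtain ⟨p, hp1, hp2, hp3⟩ := hqs i
    rw [hp3]
    apply hp2
    have hgJ : g i ∈ J := hJ ▸ Ideal.subset_span ⟨i, rfl⟩
    have := Submodule.mem_colon.mp hf (g i) hgJ
    rwa [smul_eq_mul, mul_comm] at this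
end
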